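/- For $m \geq 3$ odd, the Gromov–Hausdorff distance between the vertex set $P_2$ of a regular 2-gon (two antipodal points at distance $\pi$) and the vertex set $P_m$ of a regular $m$-gon, both inscribed in the unit circle with the geodesic metric, equals $\frac{\pi}{2} - \frac{\pi}{2m}$. -/

import Mathlib

open Real

/-- Vertex set of the regular `n`-gon inscribed in the unit circle, modeled inside
`AddCircle (2π)` whose quotient metric is exactly the geodesic metric
`d(α,β) = min (|α-β|) (2π - |α-β|)`. -/
noncomputable def Pvert (n : ℕ) : Set (AddCircle (2 * π)) :=
  Set.range fun j : Fin n => ((2 * π * j / n : ℝ) : AddCircle (2 * π))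

instance (n : ℕ) : Finite (Pvert n) := by unfold Pvert; exact (Set.finite_range _).to_subtype


instance (n : ℕ) [NeZero n] : Nonempty (Pvert n) := by
  unfold Pvert; exact ⟨⟨_, Set.mem_range_self (0 : Fin n)⟩⟩

noncomputable def wpt (m : ℕ) (t : ℤ) : AddCircle (2 * π) :=
  ((2 * π * t / m : ℝ) : AddCircle (2 * π))

lemma wpt_congr {m : ℕ} (hm : m ≠ 0) {s t : ℤ} (h : (m : ℤ) ∣ s - t) :
    wpt m s = wpt m t := by
  obtain ⟨k, hk⟩ := h
  have hm' : (m : ℝ) ≠ 0 := Nat.cast_ne_zero.mpr hm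
  unfold wpt
  rw [QuotientAddGroup.eq_iff_sub_mem]
  refine AddSubgroup.mem_zmultiples_iff.mpr ⟨k, ?_⟩
  have hs : (s : ℝ) = t + m * k := by
    have : (s : ℝ) - t = m * k := by exact_mod_cast congrArg (Int.cast : ℤ → ℝ) hk
    linarith
  rw [hs, zsmul_eq_mul]; field_simp; ring

lemma wpt_sub {m : ℕ} (s t : ℤ) : wpt m s - wpt m t = wpt m (s - t) := by
  unfold wpt
  rw [← QuotientAddGroup.mk_sub]
  congr 1
  push_cast
  ring

lemma norm_wpt {m : ℕ} (hm : m ≠ 0) (t : ℤ) :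
    ‖wpt m t‖ = 2 * π / m * |(t : ℝ) - m * round ((t : ℝ) / m)| := by
  have hm' : (m : ℝ) ≠ 0 := Nat.cast_ne_zero.mpr hm
  have hπ : (2 * π : ℝ) ≠ 0 := by positivity
  unfold wpt
  rw [AddCircle.norm_eq]
  have h1 : (2 * π)⁻¹ * (2 * π * t / m) = (t : ℝ) / m := by field_simp
  rw [h1]
  rw [show (2 * π * t / m - round ((t:ℝ)/m) * (2*π) : ℝ)
      = (2 * π / m) * ((t : ℝ) - m * round ((t:ℝ)/m)) by field_simp]
  rw [abs_mul, abs_of_pos (by positivity : (0:ℝ) < 2 * π / m)]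

lemma key_int {m : ℕ} (hm : m ≠ 0) (hodd : Odd m) (t : ℤ) :
    |(t : ℝ) - m * round ((t : ℝ) / m)| ≤ ((m : ℝ) - 1) / 2 := by
  have hm' : (0:ℝ) < m := by positivity
  set n : ℤ := round ((t : ℝ) / m) with hn
  have h1 : |(t : ℝ) / m - n| ≤ 1 / 2 := abs_sub_round _
  have h3 : ((|t - m * n| : ℤ) : ℝ) = |(t : ℝ) - m * n| := by push_cast; ring_nf
  have h2 : |(t : ℝ) - m * n| ≤ (m : ℝ) / 2 := by
    have heq : |(t : ℝ) - m * n| = |(m:ℝ)| * |(t : ℝ)/m - n| := by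
      rw [← abs_mul]; congr 1; field_simp
    rw [heq, abs_of_pos hm']
    nlinarith
  have h4 : 2 * |t - (m : ℤ) * n| ≤ (m : ℤ) := by
    have : ((2 * |t - (m:ℤ) * n| : ℤ) : ℝ) ≤ ((m : ℕ) : ℝ) := by push_cast [h3]; linarith
    exact_mod_cast this
  obtain ⟨c, hc⟩ := hodd
  have h5 : 2 * |t - (m : ℤ) * n| ≤ (m : ℤ) - 1 := by omega
  have h6 : ((2 * |t - (m:ℤ) * n| : ℤ) : ℝ) ≤ (((m:ℤ) - 1 : ℤ) : ℝ) := by exact_mod_cast h5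
  rw [← h3]
  push_cast at h6 ⊢
  linarith

lemma norm_wpt_le {m : ℕ} (hm : m ≠ 0) (hodd : Odd m) (t : ℤ) :
    ‖wpt m t‖ ≤ π - π / m := by
  have hm' : (0:ℝ) < m := by positivity
  rw [norm_wpt hm]
  calc 2 * π / m * |(t : ℝ) - m * round ((t : ℝ) / m)|
      ≤ 2 * π / m * (((m:ℝ) - 1) / 2) := by
        apply mul_le_mul_of_nonneg_left (key_int hm hodd t) (by positivity)
    _ = π - π / m := by field_simp

lemma norm_wpt_ge {m : ℕ} (hm : m ≠ 0) {t : ℤ} (ht : ¬ (m : ℤ) ∣ t) :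
    2 * π / m ≤ ‖wpt m t‖ := by
  have hm' : (0:ℝ) < m := by positivity
  rw [norm_wpt hm]
  set n : ℤ := round ((t : ℝ) / m)
  have hne : t - (m:ℤ) * n ≠ 0 := by
    intro h
    exact ht ⟨n, by omega⟩
  have h1 : (1 : ℤ) ≤ |t - (m:ℤ) * n| := by
    have := abs_pos.mpr hne
    omega
  have h2 : (1 : ℝ) ≤ |(t : ℝ) - m * n| := by
    have h3 : ((|t - m * n| : ℤ) : ℝ) = |(t : ℝ) - m * n| := by push_cast; ring_nf
    rw [← h3]; exact_mod_cast h1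
  calc 2 * π / m = 2 * π / m * 1 := by ring
    _ ≤ _ := mul_le_mul_of_nonneg_left h2 (by positivity)

lemma norm_wpt_half {m : ℕ} (hm : m ≠ 0) {t : ℤ} (ht : 2 * t = (m : ℤ) - 1) :
    ‖wpt m t‖ = π - π / m := by
  have hm' : (0:ℝ) < m := by positivity
  have htR : (t : ℝ) = ((m : ℝ) - 1) / 2 := by
    have : (2 * t : ℝ) = (m : ℝ) - 1 := by exact_mod_cast congrArg (Int.cast : ℤ → ℝ) ht
    linarith
  have hx : (2 * π * t / m : ℝ) = π - π / m := by rw [htR]; field_simp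
  have hm1 : (1:ℝ) ≤ m := by exact_mod_cast Nat.one_le_iff_ne_zero.mpr hm
  have hxle : |(2 * π * t / m : ℝ)| ≤ |2 * π| / 2 := by
    rw [hx, abs_of_pos (by positivity : (0:ℝ) < 2 * π)]
    rw [abs_of_nonneg]
    · have : 0 < π / m := by positivity
      linarith
    · have h2 : π / m ≤ π := by
        rw [div_le_iff₀ hm']
        nlinarith [pi_pos]
      linarith
  unfold wpt
  rw [(AddCircle.norm_coe_eq_abs_iff _ (by positivity)).mpr hxle, hx,
    abs_of_nonneg]
  have h2 : π / m ≤ π := by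
    rw [div_le_iff₀ hm']
    nlinarith [pi_pos]
  linarith

noncomputable def vfin (n : ℕ) (j : Fin n) : ↥(Pvert n) :=
  ⟨_, Set.mem_range_self j⟩

lemma vfin_val (n : ℕ) (j : Fin n) : (vfin n j : AddCircle (2 * π)) = wpt n (j : ℤ) := by
  show ((2 * π * j / n : ℝ) : AddCircle (2 * π)) = _
  unfold wpt
  congr 2

lemma forall_pvert (n : ℕ) (x : ↥(Pvert n)) : ∃ j : Fin n, x = vfin n j := by
  obtain ⟨x, hx⟩ := x
  obtain ⟨j, hj⟩ := hx
  exact ⟨j, Subtype.ext hj.symm⟩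

lemma dist_vfin (n : ℕ) (i j : Fin n) :
    dist (vfin n i) (vfin n j) = ‖wpt n ((i : ℤ) - (j : ℤ))‖ := by
  rw [Subtype.dist_eq, vfin_val, vfin_val, dist_eq_norm, wpt_sub]

lemma vfin_ne {n : ℕ} (hn : n ≠ 0) {i j : Fin n} (hij : i ≠ j) : vfin n i ≠ vfin n j := by
  intro h
  have hd : dist (vfin n i) (vfin n j) = 0 := by rw [h, dist_self]
  rw [dist_vfin] at hd
  have hdvd : ¬ (n : ℤ) ∣ ((i : ℤ) - j) := by
    intro hdvd
    have habs : |(i : ℤ) - j| < n := by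
      have := i.isLt; have := j.isLt; rw [abs_lt]; omega
    have := Int.eq_zero_of_abs_lt_dvd hdvd habs
    have : (i : ℤ) = j := by omega
    exact hij (Fin.ext (by exact_mod_cast this))
  have := norm_wpt_ge hn hdvd
  have hn' : (0:ℝ) < n := by positivity
  rw [hd] at this
  have h0 : (0:ℝ) < 2 * π / n := by positivity
  linarith

lemma dist_v2 : dist (vfin 2 0) (vfin 2 1) = π := by
  rw [dist_vfin]
  show ‖wpt 2 (0 - 1)‖ = π
  have h1 : (2 * π * ((0 - 1 : ℤ) : ℝ) / (2:ℕ) : ℝ) = -π := by push_cast; field_simp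
  unfold wpt
  rw [h1]
  have : |(-π : ℝ)| ≤ |2 * π| / 2 := by
    rw [abs_neg, abs_of_pos pi_pos, abs_of_pos (by positivity : (0:ℝ) < 2*π)]
    linarith
  rw [(AddCircle.norm_coe_eq_abs_iff _ (by positivity)).mpr this, abs_neg,
    abs_of_pos pi_pos]

lemma fin2_cases (x : ↥(Pvert 2)) : x = vfin 2 0 ∨ x = vfin 2 1 := by
  obtain ⟨j, rfl⟩ := forall_pvert 2 x
  have : j = 0 ∨ j = 1 := by omega
  rcases this with h | h <;> [left; right] <;> rw [h]

lemma odd_cycle {m : ℕ} [NeZero m] (hodd : Odd m) (k : ZMod m) (c : ZMod m → Bool)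
    (h : ∀ z, c (z + k) = !(c z)) : False := by
  have key : ∀ n : ℕ, c ((n : ZMod m) * k) = if n % 2 = 1 then !(c 0) else c 0 := by
    intro n
    induction n with
    | zero => simp
    | succ n ih =>
      have : (((n+1 : ℕ) : ZMod m)) * k = (n : ZMod m) * k + k := by push_cast; ring
      rw [this, h, ih]
      rcases Nat.even_or_odd n with he | ho
      · have h1 : n % 2 = 0 := Nat.even_iff.mp he
        have h2 : (n+1) % 2 = 1 := by omega
        simp [h1, h2]
      · have h1 : n % 2 = 1 := Nat.odd_iff.mp ho
        have h2 : (n+1) % 2 = 0 := by omega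
        simp [h1, h2]
  have hm := key m
  rw [ZMod.natCast_self, Nat.odd_iff.mp hodd, zero_mul] at hm
  simp at hm

theorem stmt7 (m : ℕ) (hm : 3 ≤ m) (hodd : Odd m) :
    haveI : NeZero m := ⟨by omega⟩
    GromovHausdorff.ghDist (Pvert 2) (Pvert m) = π / 2 - π / (2 * m) := by
  haveI : NeZero m := ⟨by omega⟩
  have hm0 : m ≠ 0 := by omega
  have hmR : (0:ℝ) < m := by positivity
  obtain ⟨c₀, hc₀⟩ := id hodd
  have hc2 : 2 * (c₀ : ℤ) = (m : ℤ) - 1 := by omega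
  classical
  apply le_antisymm
  · -- upper bound
    have hsymm : GromovHausdorff.ghDist ↥(Pvert 2) ↥(Pvert m)
        = GromovHausdorff.ghDist ↥(Pvert m) ↥(Pvert 2) := dist_comm _ _
    rw [hsymm]
    have hdiam : ∀ x y : ↥(Pvert m), dist x y ≤ π - π / m := by
      intro x y
      obtain ⟨i, rfl⟩ := forall_pvert m x
      obtain ⟨j, rfl⟩ := forall_pvert m y
      rw [dist_vfin]
      exact norm_wpt_le hm0 hodd _
    have hmin : ∀ x y : ↥(Pvert m), x ≠ y → 2 * π / m ≤ dist x y := by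
      intro x y hxy
      obtain ⟨i, rfl⟩ := forall_pvert m x
      obtain ⟨j, rfl⟩ := forall_pvert m y
      rw [dist_vfin]
      apply norm_wpt_ge hm0
      intro hdvd
      have hi := i.isLt; have hj := j.isLt
      have habs : |(i : ℤ) - j| < m := by rw [abs_lt]; omega
      have h0 := Int.eq_zero_of_abs_lt_dvd hdvd habs
      have : (i : ℤ) = j := by omega
      exact hxy (congrArg (vfin m) (Fin.ext (by exact_mod_cast this)))
    have key := GromovHausdorff.ghDist_le_of_approx_subsets
      (X := ↥(Pvert m)) (Y := ↥(Pvert 2)) (s := (Set.univ : Set ↥(Pvert m)))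
      (fun x => if (x : ↥(Pvert m)) = vfin m 0 then vfin 2 0 else vfin 2 1)
      (ε₁ := 0) (ε₂ := π - π / m) (ε₃ := 0)
      (fun x => ⟨x, Set.mem_univ x, by simp⟩)
      (by
        intro y
        rcases fin2_cases y with rfl | rfl
        · exact ⟨⟨vfin m 0, Set.mem_univ _⟩, by simp⟩
        · refine ⟨⟨vfin m 1, Set.mem_univ _⟩, ?_⟩
          have hne : vfin m (1 : Fin m) ≠ vfin m 0 :=
            vfin_ne hm0 (by
              have hv1 : (1 : Fin m).val = 1 := by
                rw [Fin.val_one']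
                exact Nat.mod_eq_of_lt (by omega)
              simp only [Fin.ne_iff_vne, hv1, Fin.val_zero]
              omega)
          simp [hne])
      (by
        intro x y
        by_cases hF : (if (x : ↥(Pvert m)) = vfin m 0 then vfin 2 0 else vfin 2 1)
            = (if (y : ↥(Pvert m)) = vfin m 0 then vfin 2 0 else vfin 2 1)
        · rw [hF, dist_self, sub_zero, abs_of_nonneg dist_nonneg]
          exact hdiam _ _
        · have hxy : (x : ↥(Pvert m)) ≠ (y : ↥(Pvert m)) := by
            intro h; exact hF (by rw [h])
          have hd2 : dist (if (x : ↥(Pvert m)) = vfin m 0 then vfin 2 0 else vfin 2 1)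
              (if (y : ↥(Pvert m)) = vfin m 0 then vfin 2 0 else vfin 2 1) = π := by
            by_cases h1 : (x : ↥(Pvert m)) = vfin m 0 <;>
              by_cases h2 : (y : ↥(Pvert m)) = vfin m 0
            · exact absurd (by rw [if_pos h1, if_pos h2]) hF
            · rw [if_pos h1, if_neg h2]; exact dist_v2
            · rw [if_neg h1, if_pos h2, dist_comm]; exact dist_v2
            · exact absurd (by rw [if_neg h1, if_neg h2]) hF
          rw [hd2]
          have hle := hdiam (x : ↥(Pvert m)) (y : ↥(Pvert m))
          have hge := hmin (x : ↥(Pvert m)) (y : ↥(Pvert m)) hxy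
          have hp1 : 0 < π / m := by positivity
          have hdist_sub : dist (x : ↥(Pvert m)) ((y : ↥(Pvert m))) = dist x y := rfl
          have h2m : 2 * π / (m:ℝ) = 2 * (π / m) := by ring
          have hpp := Real.pi_pos
          rw [abs_le]
          constructor <;> rw [← hdist_sub] <;> linarith)
    calc GromovHausdorff.ghDist ↥(Pvert m) ↥(Pvert 2) ≤ 0 + (π - π / m) / 2 + 0 := key
      _ = π / 2 - π / (2 * m) := by field_simp; ring
  · -- lower bound
    set r := GromovHausdorff.ghDist ↥(Pvert 2) ↥(Pvert m) with hr
    have key : ∀ ε : ℝ, 0 < ε → π - π / m ≤ 2 * r + 2 * ε := by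
      intro ε hε
      set Φ := GromovHausdorff.optimalGHInjl ↥(Pvert 2) ↥(Pvert m) with hΦ
      set Ψ := GromovHausdorff.optimalGHInjr ↥(Pvert 2) ↥(Pvert m) with hΨ
      have hopt := GromovHausdorff.hausdorffDist_optimal (X := ↥(Pvert 2)) (Y := ↥(Pvert m))
      have hfin : EMetric.hausdorffEdist (Set.range Ψ) (Set.range Φ) ≠ ⊤ :=
        Metric.hausdorffEdist_ne_top_of_nonempty_of_bounded (Set.range_nonempty _)
          (Set.range_nonempty _) Metric.isBounded_of_compactSpace
          Metric.isBounded_of_compactSpace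
      have happrox : ∀ j : Fin m, ∃ x : ↥(Pvert 2), dist (Ψ (vfin m j)) (Φ x) < r + ε := by
        intro j
        have hlt : Metric.hausdorffDist (Set.range Ψ) (Set.range Φ) < r + ε := by
          rw [Metric.hausdorffDist_comm, hopt]
          linarith
        obtain ⟨p, hp, hd⟩ :=
          Metric.exists_dist_lt_of_hausdorffDist_lt (Set.mem_range_self _) hlt hfin
        obtain ⟨x, rfl⟩ := hp
        exact ⟨x, hd⟩
      choose f hf using happrox
      set zf : ZMod m → Fin m := fun z => ⟨z.val, ZMod.val_lt z⟩ with hzf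
      set C : ZMod m → Bool := fun z => decide (f (zf z) = vfin 2 0) with hC
      have hmono : ∃ z : ZMod m, C (z + (c₀ : ZMod m)) = C z := by
        by_contra hcon
        push_neg at hcon
        exact odd_cycle hodd (c₀ : ZMod m) C (fun z => by
          have h := hcon z
          generalize C z = a at h ⊢; generalize C (z + (c₀ : ZMod m)) = b at h ⊢; revert h; cases a <;> cases b <;> decide)
      obtain ⟨z, hz⟩ := hmono
      have hsame : f (zf (z + (c₀ : ZMod m))) = f (zf z) := by
        by_cases h1 : f (zf (z + (c₀ : ZMod m))) = vfin 2 0 <;>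
          by_cases h2 : f (zf z) = vfin 2 0
        · rw [h1, h2]
        · exfalso; simp [hC, h1, h2] at hz
        · exfalso; simp [hC, h1, h2] at hz
        · rcases fin2_cases (f (zf (z + (c₀ : ZMod m)))) with ha | ha
          · exact absurd ha h1
          · rcases fin2_cases (f (zf z)) with hb | hb
            · exact absurd hb h2
            · rw [ha, hb]
      have hzv : ∀ w : ZMod m, ((w.val : ℕ) : ZMod m) = w := by
        intro w
        simp [ZMod.natCast_val, ZMod.cast_id]
      have hdist : dist (vfin m (zf (z + (c₀ : ZMod m)))) (vfin m (zf z)) = π - π / m := by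
        rw [dist_vfin]
        have hcong : wpt m (((zf (z + (c₀ : ZMod m)) : Fin m) : ℤ) - ((zf z : Fin m) : ℤ))
            = wpt m (c₀ : ℤ) := by
          apply wpt_congr hm0
          rw [← ZMod.intCast_zmod_eq_zero_iff_dvd]
          push_cast
          rw [hzv, hzv]
          ring
        rw [hcong]
        exact norm_wpt_half hm0 hc2
      have hiso := (GromovHausdorff.isometry_optimalGHInjr ↥(Pvert 2) ↥(Pvert m)).dist_eq
        (vfin m (zf (z + (c₀ : ZMod m)))) (vfin m (zf z))
      have h1 := hf (zf (z + (c₀ : ZMod m)))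
      have h2 := hf (zf z)
      have htri := dist_triangle (Ψ (vfin m (zf (z + (c₀ : ZMod m)))))
        (Φ (f (zf (z + (c₀ : ZMod m))))) (Ψ (vfin m (zf z)))
      rw [hsame] at h1 htri
      rw [dist_comm (Φ (f (zf z))) (Ψ (vfin m (zf z)))] at htri
      have : dist (Ψ (vfin m (zf (z + (c₀ : ZMod m))))) (Ψ (vfin m (zf z))) = π - π / m := by
        rw [hiso, hdist]
      linarith
    by_contra hcon
    push_neg at hcon
    have hε : 0 < (π / 2 - π / (2 * m) - r) / 2 := by linarith
    have hk := key _ hε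
    have harith : 2 * (π / (2 * m)) = π / m := by field_simp
    linarith
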